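/- Let n be a natural number and τ a permutation of Fin n. Let q : PMF (Set (Set (Fin n))) be the pushforward of the uniform distribution on Equiv.Perm (Fin n) under the map σ ↦ 𝒢[σ⁻¹ * τ * σ], i.e., q := PMF.map (fun σ => 𝒢[σ⁻¹ * τ * σ]) (PMF.uniformOfFintype (Equiv.Perm (Fin n))). Then for every permutation ν of Fin n and every 𝒢 : Set (Set (Fin n)), q 𝒢 = q ((fun B => ν '' B) '' 𝒢). (The grouping specified by a uniformly random conjugate of τ assigns equal probability to any grouping and any relabeling of it.) -/

import Mathlib

open scoped ENNReal

/-- The grouping (orbit partition) specified by a permutation. -/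
def grouping {n : ℕ} (π : Equiv.Perm (Fin n)) : Set (Set (Fin n)) :=
  Set.range (fun i => {x | Equiv.Perm.SameCycle π i x})

lemma grouping_conj {n : ℕ} (ν π : Equiv.Perm (Fin n)) :
    grouping (ν * π * ν⁻¹) = (fun B => ⇑ν '' B) '' grouping π := by
  unfold grouping
  rw [← Set.range_comp]
  have key : ∀ j : Fin n,
      ((fun B => ⇑ν '' B) ∘ fun i => {x | Equiv.Perm.SameCycle π i x}) j
        = {x | Equiv.Perm.SameCycle (ν * π * ν⁻¹) (ν j) x} := by
    intro j
    ext x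
    simp only [Function.comp_apply, Set.mem_image, Set.mem_setOf_eq,
      Equiv.Perm.sameCycle_conj, Equiv.Perm.coe_inv, Equiv.symm_apply_apply]
    constructor
    · rintro ⟨y, hy, rfl⟩; simpa using hy
    · intro h; exact ⟨ν⁻¹ x, h, by simp⟩
  rw [funext key]
  ext S
  simp only [Set.mem_range]
  constructor
  · rintro ⟨i, rfl⟩; exact ⟨ν⁻¹ i, by simp⟩
  · rintro ⟨j, rfl⟩; exact ⟨ν j, rfl⟩

theorem pmf_grouping_relabel_invariant {n : ℕ} (τ : Equiv.Perm (Fin n))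
    (q : PMF (Set (Set (Fin n))))
    (hq : q = PMF.map (fun σ => grouping (σ⁻¹ * τ * σ))
      (PMF.uniformOfFintype (Equiv.Perm (Fin n))))
    (ν : Equiv.Perm (Fin n)) (𝒢 : Set (Set (Fin n))) :
    q 𝒢 = q ((fun B => ⇑ν '' B) '' 𝒢) := by
  classical
  subst hq
  simp only [PMF.map_apply]
  conv_rhs => rw [← Equiv.tsum_eq (Equiv.mulRight ν⁻¹)]
  apply tsum_congr
  intro σ
  have h1 : grouping ((Equiv.mulRight ν⁻¹ σ)⁻¹ * τ * Equiv.mulRight ν⁻¹ σ)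
      = (fun B => ⇑ν '' B) '' grouping (σ⁻¹ * τ * σ) := by
    have h0 : (Equiv.mulRight ν⁻¹ σ)⁻¹ * τ * Equiv.mulRight ν⁻¹ σ
        = ν * (σ⁻¹ * τ * σ) * ν⁻¹ := by
      simp only [Equiv.coe_mulRight, mul_inv_rev, inv_inv]
      group
    rw [h0, grouping_conj]
  rw [h1]
  have hinj : Function.Injective (fun B : Set (Fin n) => ⇑ν '' B) :=
    Set.image_injective.mpr ν.injective
  have h2 : ((fun B => ⇑ν '' B) '' 𝒢 = (fun B => ⇑ν '' B) '' grouping (σ⁻¹ * τ * σ))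
      ↔ 𝒢 = grouping (σ⁻¹ * τ * σ) := (Set.image_injective.mpr hinj).eq_iff
  simp only [h2, PMF.uniformOfFintype_apply]
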